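/- Every homogeneous polynomial f ∈ ℝ[x,y] of degree n ≥ 2 that factors as a product of n real linear forms which are pairwise distinct up to nonzero constant multiples is hyperbolic, i.e., Hess(f)(x,y) < 0 for all (x,y) ≠ (0,0). -/

import Mathlib

open MvPolynomial Finset

noncomputable def Hess (f : MvPolynomial (Fin 2) ℝ) : MvPolynomial (Fin 2) ℝ :=
  pderiv 0 (pderiv 0 f) * pderiv 1 (pderiv 1 f) - (pderiv 0 (pderiv 1 f)) ^ 2


lemma field_key {ι : Type*} (s : Finset ι) (x y : ℝ) (hy : y ≠ 0)
    (u v : ι → ℝ) (h : ∀ i ∈ s, x * u i + y * v i = 1) :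
    ((∑ i ∈ s, u i)^2 - ∑ i ∈ s, (u i)^2) * ((∑ i ∈ s, v i)^2 - ∑ i ∈ s, (v i)^2)
      - ((∑ i ∈ s, u i) * (∑ i ∈ s, v i) - ∑ i ∈ s, u i * v i)^2
    = -((s.card : ℝ) - 1) *
       ((∑ i ∈ s, (u i)^2) * (∑ i ∈ s, (v i)^2) - (∑ i ∈ s, u i * v i)^2) := by
  set U := ∑ i ∈ s, u i with hU
  set P := ∑ i ∈ s, (u i)^2 with hP
  have hV : (∑ i ∈ s, v i) * y = (s.card : ℝ) - x * U := by
    rw [Finset.sum_mul]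
    rw [show ∑ i ∈ s, v i * y = ∑ i ∈ s, (1 - x * u i) from
      Finset.sum_congr rfl fun i hi => by have := h i hi; linear_combination this]
    rw [Finset.sum_sub_distrib, Finset.sum_const, ← Finset.mul_sum]
    simp [hU]
  have hQ : (∑ i ∈ s, (v i)^2) * y^2 = (s.card : ℝ) - 2*x*U + x^2*P := by
    rw [Finset.sum_mul]
    rw [show ∑ i ∈ s, (v i)^2 * y^2 = ∑ i ∈ s, (1 - 2*x*u i + x^2*(u i)^2) from
      Finset.sum_congr rfl fun i hi => by have := h i hi; linear_combination (y * v i + (1 - x * u i)) * this]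
    rw [Finset.sum_add_distrib, Finset.sum_sub_distrib, Finset.sum_const,
      ← Finset.mul_sum, ← Finset.mul_sum]
    simp [hU, hP]
  have hR : (∑ i ∈ s, u i * v i) * y = U - x * P := by
    rw [Finset.sum_mul]
    rw [show ∑ i ∈ s, u i * v i * y = ∑ i ∈ s, (u i - x * (u i)^2) from
      Finset.sum_congr rfl fun i hi => by have := h i hi; linear_combination (u i) * this]
    rw [Finset.sum_sub_distrib, ← Finset.mul_sum]
  have eV : (∑ i ∈ s, v i) = ((s.card : ℝ) - x * U) / y := (eq_div_iff hy).2 hV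
  have eQ : (∑ i ∈ s, (v i)^2) = ((s.card : ℝ) - 2*x*U + x^2*P) / y^2 :=
    (eq_div_iff (pow_ne_zero 2 hy)).2 hQ
  have eR : (∑ i ∈ s, u i * v i) = (U - x * P) / y := (eq_div_iff hy).2 hR
  rw [eV, eQ, eR]
  field_simp
  ring

lemma split_pairs {n : ℕ} (w z : Fin n → ℝ) :
    (∑ i, w i) * (∑ i, z i)
      = (∑ i, ∑ j ∈ univ.erase i, w i * z j) + ∑ i, w i * z i := by
  rw [Finset.sum_mul_sum]
  rw [← Finset.sum_add_distrib]
  refine Finset.sum_congr rfl fun i _ => ?_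
  rw [add_comm, Finset.add_sum_erase _ (fun j => w i * z j) (mem_univ i)]

lemma lagrange {ι : Type*} (s : Finset ι) (u v : ι → ℝ) :
    (∑ i ∈ s, u i ^ 2) * (∑ i ∈ s, v i ^ 2) - (∑ i ∈ s, u i * v i) ^ 2
      = (1 / 2) * ∑ i ∈ s, ∑ j ∈ s, (u i * v j - u j * v i) ^ 2 := by
  have h1 : ∑ i ∈ s, ∑ j ∈ s, (u i * v j - u j * v i) ^ 2
      = ∑ i ∈ s, ∑ j ∈ s,
          (u i ^ 2 * v j ^ 2 + u j ^ 2 * v i ^ 2 - 2 * (u i * v i * (u j * v j))) :=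
    Finset.sum_congr rfl fun i _ => Finset.sum_congr rfl fun j _ => by ring
  have e1 : ∑ i ∈ s, ∑ j ∈ s, u i ^ 2 * v j ^ 2
      = (∑ i ∈ s, u i ^ 2) * (∑ i ∈ s, v i ^ 2) := (Finset.sum_mul_sum s s _ _).symm
  have e2 : ∑ i ∈ s, ∑ j ∈ s, u j ^ 2 * v i ^ 2
      = (∑ i ∈ s, u i ^ 2) * (∑ i ∈ s, v i ^ 2) := by
    rw [Finset.sum_comm]; exact e1
  have e3 : ∑ i ∈ s, ∑ j ∈ s, u i * v i * (u j * v j)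
      = (∑ i ∈ s, u i * v i) ^ 2 := by
    rw [sq, Finset.sum_mul_sum]
  have h2 : ∑ i ∈ s, ∑ j ∈ s,
          (u i ^ 2 * v j ^ 2 + u j ^ 2 * v i ^ 2 - 2 * (u i * v i * (u j * v j)))
      = (∑ i ∈ s, ∑ j ∈ s, u i ^ 2 * v j ^ 2) + (∑ i ∈ s, ∑ j ∈ s, u j ^ 2 * v i ^ 2)
          - 2 * (∑ i ∈ s, ∑ j ∈ s, u i * v i * (u j * v j)) := by
    rw [← Finset.sum_add_distrib, Finset.mul_sum, ← Finset.sum_sub_distrib]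
    refine Finset.sum_congr rfl fun i _ => ?_
    rw [← Finset.sum_add_distrib, Finset.mul_sum, ← Finset.sum_sub_distrib]
  rw [h1, h2, e1, e2, e3]
  ring


lemma pderiv_prod {ι : Type*} [DecidableEq ι] (m : Fin 2) (L : ι → MvPolynomial (Fin 2) ℝ)
    (c : ι → ℝ) (hc : ∀ i, pderiv m (L i) = C (c i)) (s : Finset ι) :
    pderiv m (∏ i ∈ s, L i) = ∑ i ∈ s, C (c i) * ∏ k ∈ s.erase i, L k := by
  induction s using Finset.induction_on with
  | empty => simp
  | insert a s ha ih =>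
    rw [Finset.prod_insert ha, pderiv_mul, ih, Finset.sum_insert ha, hc,
      Finset.erase_insert ha, Finset.mul_sum]
    congr 1
    refine Finset.sum_congr rfl fun i hi => ?_
    rw [Finset.erase_insert_of_ne (by rintro rfl; exact ha hi),
      Finset.prod_insert (fun h => ha (Finset.mem_of_mem_erase h))]
    ring

lemma real_main (n : ℕ) (hn : 2 ≤ n) (a b : Fin n → ℝ)
    (hpair : ∀ i j, i ≠ j → a i * b j - a j * b i ≠ 0) (x y : ℝ)
    (hxy : ¬(x = 0 ∧ y = 0)) (l : Fin n → ℝ) (hl : ∀ k, l k = a k * x + b k * y) :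
    (∑ i, ∑ j ∈ univ.erase i, a i * a j * ∏ k ∈ (univ.erase i).erase j, l k) *
      (∑ i, ∑ j ∈ univ.erase i, b i * b j * ∏ k ∈ (univ.erase i).erase j, l k) -
      (∑ i, ∑ j ∈ univ.erase i, b i * a j * ∏ k ∈ (univ.erase i).erase j, l k) ^ 2 < 0 := by
  have hcard : 1 < Fintype.card (Fin n) := by simp; omega
  have hab : ∀ i, ¬(a i = 0 ∧ b i = 0) := by
    rintro i ⟨ha, hb⟩
    obtain ⟨j, hj⟩ := Fintype.exists_ne_of_one_lt_card hcard i
    exact hpair i j (Ne.symm hj) (by rw [ha, hb]; ring)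
  have tfact : ∀ i₀, l i₀ = 0 → ∃ t, t ≠ 0 ∧ ∀ k, l k = -t * (a i₀ * b k - a k * b i₀) := by
    intro i₀ h0
    have h0' : a i₀ * x + b i₀ * y = 0 := by rw [← hl]; exact h0
    by_cases hb : b i₀ = 0
    · have ha : a i₀ ≠ 0 := fun ha => hab i₀ ⟨ha, hb⟩
      have hx : x = 0 := by
        rw [hb] at h0'
        have : a i₀ * x = 0 := by linarith
        exact (mul_eq_zero.1 this).resolve_left ha
      have hy : y ≠ 0 := fun hy => hxy ⟨hx, hy⟩
      refine ⟨-y / a i₀, fun h => hy (by field_simp at h; linarith), fun k => ?_⟩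
      rw [hl k, hx, hb]
      field_simp
      ring
    · refine ⟨x / b i₀, fun h => ?_, fun k => ?_⟩
      · rw [div_eq_zero_iff] at h
        have hx : x = 0 := h.resolve_right hb
        rw [hx] at h0'
        have : y = 0 := by
          have : b i₀ * y = 0 := by linarith
          exact (mul_eq_zero.1 this).resolve_left hb
        exact hxy ⟨hx, this⟩
      · have hy : y = -(a i₀ * x) / b i₀ := by field_simp; linarith
        rw [hl k, hy]
        field_simp
        ring
  by_cases hall : ∀ k, l k ≠ 0
  · have rel : ∀ k ∈ (univ : Finset (Fin n)), x * (a k / l k) + y * (b k / l k) = 1 := by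
      intro k _
      have h1 := hall k
      field_simp
      rw [hl k]; ring
    -- master identity
    have master : ((∑ i, a i / l i)^2 - ∑ i, (a i / l i)^2) *
          ((∑ i, b i / l i)^2 - ∑ i, (b i / l i)^2)
        - ((∑ i, a i / l i) * (∑ i, b i / l i) - ∑ i, (a i / l i) * (b i / l i))^2
        = -((n : ℝ) - 1) * ((∑ i, (a i / l i)^2) * (∑ i, (b i / l i)^2)
            - (∑ i, (a i / l i) * (b i / l i))^2) := by
      rcases not_and_or.1 hxy with hx | hy
      · have hvu : ∑ i, (b i / l i) * (a i / l i) = ∑ i, (a i / l i) * (b i / l i) :=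
          Finset.sum_congr rfl fun i _ => mul_comm _ _
        have hk := field_key univ y x hx (fun k => b k / l k) (fun k => a k / l k)
          (fun i hi => by linarith [rel i hi])
        simp only [Finset.card_univ, Fintype.card_fin] at hk
        rw [hvu] at hk
        linear_combination hk
      · have hk := field_key univ x y hy (fun k => a k / l k) (fun k => b k / l k) rel
        simp only [Finset.card_univ, Fintype.card_fin] at hk
        linear_combination hk
    -- conversion of polynomial sums
    have hFij : ∀ i : Fin n, ∀ j ∈ univ.erase i,
        (∏ k, l k) = l i * (l j * ∏ k ∈ (univ.erase i).erase j, l k) := by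
      intro i j hj
      rw [Finset.mul_prod_erase _ _ hj, Finset.mul_prod_erase _ _ (mem_univ i)]
    have sum_eq : ∀ c e : Fin n → ℝ,
        (∑ i, ∑ j ∈ univ.erase i, c i * e j * ∏ k ∈ (univ.erase i).erase j, l k)
          = (∏ k, l k) * ((∑ i, c i / l i) * (∑ i, e i / l i)
              - ∑ i, (c i / l i) * (e i / l i)) := by
      intro c e
      rw [split_pairs (fun i => c i / l i) (fun i => e i / l i), add_sub_cancel_right,
        Finset.mul_sum]
      refine Finset.sum_congr rfl fun i _ => ?_
      rw [Finset.mul_sum]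
      refine Finset.sum_congr rfl fun j hj => ?_
      rw [hFij i j hj]
      have h1 := hall i
      have h2 := hall j
      field_simp
    rw [sum_eq a a, sum_eq b b, sum_eq b a]
    have sA : ∑ i, (a i / l i) * (a i / l i) = ∑ i, (a i / l i)^2 :=
      Finset.sum_congr rfl fun i _ => (sq _).symm
    have sB : ∑ i, (b i / l i) * (b i / l i) = ∑ i, (b i / l i)^2 :=
      Finset.sum_congr rfl fun i _ => (sq _).symm
    have sE : ∑ i, (b i / l i) * (a i / l i) = ∑ i, (a i / l i) * (b i / l i) :=
      Finset.sum_congr rfl fun i _ => mul_comm _ _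
    rw [sA, sB, sE]
    -- positivity of PQ - R^2
    have hPQR : 0 < (∑ i, (a i / l i)^2) * (∑ i, (b i / l i)^2)
        - (∑ i, (a i / l i) * (b i / l i))^2 := by
      rw [lagrange]
      set i0 : Fin n := ⟨0, by omega⟩
      set j0 : Fin n := ⟨1, by omega⟩
      have hij : i0 ≠ j0 := by simp [i0, j0, Fin.ext_iff]
      have hterm : 0 < ((a i0 / l i0) * (b j0 / l j0) - (a j0 / l j0) * (b i0 / l i0))^2 := by
        have heq : (a i0 / l i0) * (b j0 / l j0) - (a j0 / l j0) * (b i0 / l i0)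
            = (a i0 * b j0 - a j0 * b i0) / (l i0 * l j0) := by
          field_simp
        have hne : (a i0 / l i0) * (b j0 / l j0) - (a j0 / l j0) * (b i0 / l i0) ≠ 0 := by
          rw [heq]
          exact div_ne_zero (hpair i0 j0 hij) (mul_ne_zero (hall i0) (hall j0))
        exact lt_of_le_of_ne (sq_nonneg _) (Ne.symm (pow_ne_zero 2 hne))
      apply mul_pos (by norm_num)
      exact Finset.sum_pos' (fun i _ => Finset.sum_nonneg fun j _ => sq_nonneg _)
        ⟨i0, mem_univ _, Finset.sum_pos' (fun j _ => sq_nonneg _) ⟨j0, mem_univ _, hterm⟩⟩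
    have hF : (∏ k, l k) ≠ 0 := Finset.prod_ne_zero_iff.2 fun k _ => hall k
    have hF2 : 0 < (∏ k, l k)^2 := lt_of_le_of_ne (sq_nonneg _) (Ne.symm (pow_ne_zero 2 hF))
    have hn1 : 0 < (n : ℝ) - 1 := by
      have : (2 : ℝ) ≤ n := by exact_mod_cast hn
      linarith
    have final : (∏ k, l k) * ((∑ i, a i / l i) * (∑ i, a i / l i) - ∑ i, (a i / l i)^2) *
          ((∏ k, l k) * ((∑ i, b i / l i) * (∑ i, b i / l i) - ∑ i, (b i / l i)^2)) -
          ((∏ k, l k) * ((∑ i, b i / l i) * (∑ i, a i / l i)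
              - ∑ i, (a i / l i) * (b i / l i)))^2
        = (∏ k, l k)^2 * (-((n : ℝ) - 1) * ((∑ i, (a i / l i)^2) * (∑ i, (b i / l i)^2)
            - (∑ i, (a i / l i) * (b i / l i))^2)) := by
      linear_combination ((∏ k, l k)^2) * master
    have hneg : (∏ k, l k)^2 * (-((n : ℝ) - 1) * ((∑ i, (a i / l i)^2) * (∑ i, (b i / l i)^2)
        - (∑ i, (a i / l i) * (b i / l i))^2)) < 0 :=
      mul_neg_of_pos_of_neg hF2 (by nlinarith)
    linarith [final, hneg]

  · push_neg at hall
    obtain ⟨i₀, h0⟩ := hall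
    obtain ⟨t, ht, hlk⟩ := tfact i₀ h0
    have hPz : ∀ i j : Fin n, i ≠ i₀ → j ≠ i₀ → ∏ k ∈ (univ.erase i).erase j, l k = 0 := by
      intro i j hi hj
      exact Finset.prod_eq_zero
        (Finset.mem_erase.2 ⟨Ne.symm hj, Finset.mem_erase.2 ⟨Ne.symm hi, mem_univ _⟩⟩) h0
    have collapse : ∀ c d : Fin n → ℝ,
        (∑ i, ∑ j ∈ univ.erase i, c i * d j * ∏ k ∈ (univ.erase i).erase j, l k)
          = c i₀ * (∑ j ∈ univ.erase i₀, d j * ∏ k ∈ (univ.erase i₀).erase j, l k)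
            + d i₀ * (∑ i ∈ univ.erase i₀, c i * ∏ k ∈ (univ.erase i₀).erase i, l k) := by
      intro c d
      rw [← Finset.add_sum_erase _ _ (mem_univ i₀)]
      congr 1
      · rw [Finset.mul_sum]
        exact Finset.sum_congr rfl fun j _ => by ring
      · rw [Finset.mul_sum]
        refine Finset.sum_congr rfl fun i hi => ?_
        have hii₀ : i ≠ i₀ := (Finset.mem_erase.1 hi).1
        rw [Finset.sum_eq_single_of_mem i₀
          (Finset.mem_erase.2 ⟨Ne.symm hii₀, mem_univ _⟩)
          (fun j hj hji₀ => by rw [hPz i j hii₀ hji₀, mul_zero])]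
        rw [Finset.erase_right_comm]
        ring
    set Sa := ∑ j ∈ univ.erase i₀, a j * ∏ k ∈ (univ.erase i₀).erase j, l k with hSa
    set Sb := ∑ j ∈ univ.erase i₀, b j * ∏ k ∈ (univ.erase i₀).erase j, l k with hSb
    have hne : a i₀ * Sb - b i₀ * Sa ≠ 0 := by
      have hdif : a i₀ * Sb - b i₀ * Sa
          = ∑ j ∈ univ.erase i₀,
              (a i₀ * b j - a j * b i₀) * ∏ k ∈ (univ.erase i₀).erase j, l k := by
        rw [hSa, hSb, Finset.mul_sum, Finset.mul_sum, ← Finset.sum_sub_distrib]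
        exact Finset.sum_congr rfl fun j _ => by ring
      have hterm : ∀ j ∈ univ.erase i₀,
          (a i₀ * b j - a j * b i₀) * ∏ k ∈ (univ.erase i₀).erase j, l k
            = (-t) ^ (n - 2) * ∏ k ∈ univ.erase i₀, (a i₀ * b k - a k * b i₀) := by
        intro j hj
        have hprod : ∏ k ∈ (univ.erase i₀).erase j, l k
            = ∏ k ∈ (univ.erase i₀).erase j, (-t * (a i₀ * b k - a k * b i₀)) :=
          Finset.prod_congr rfl fun k _ => hlk k
        have hc : ((univ.erase i₀).erase j).card = n - 2 := by
          rw [Finset.card_erase_of_mem hj, Finset.card_erase_of_mem (mem_univ i₀),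
            Finset.card_univ, Fintype.card_fin]
          omega
        rw [hprod, Finset.prod_mul_distrib, Finset.prod_const, hc,
          ← Finset.mul_prod_erase _ _ hj]
        ring
      rw [hdif, Finset.sum_congr rfl hterm, Finset.sum_const,
        Finset.card_erase_of_mem (mem_univ i₀), Finset.card_univ, Fintype.card_fin,
        nsmul_eq_mul]
      refine mul_ne_zero ?_ (mul_ne_zero (pow_ne_zero _ (neg_ne_zero.2 ht)) ?_)
      · have : (1 : ℝ) ≤ (n - 1 : ℕ) := by exact_mod_cast Nat.one_le_iff_ne_zero.2 (by omega)
        linarith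
      · exact (Finset.prod_ne_zero_iff).2 fun k hk =>
          hpair i₀ k (Ne.symm (Finset.mem_erase.1 hk).1)
    rw [collapse a a, collapse b b, collapse b a]
    have hiden : (a i₀ * Sa + a i₀ * Sa) * (b i₀ * Sb + b i₀ * Sb)
        - (b i₀ * Sa + a i₀ * Sb) ^ 2 = -(a i₀ * Sb - b i₀ * Sa) ^ 2 := by ring
    rw [hiden]
    have : 0 < (a i₀ * Sb - b i₀ * Sa) ^ 2 :=
      lt_of_le_of_ne (sq_nonneg _) (Ne.symm (pow_ne_zero 2 hne))
    linarith

theorem split_simple_factors_hyperbolic (n : ℕ) (hn : 2 ≤ n)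
    (a b : Fin n → ℝ)
    (hpair : ∀ i j, i ≠ j → a i * b j - a j * b i ≠ 0)
    (f : MvPolynomial (Fin 2) ℝ)
    (hf : f = ∏ i, (C (a i) * X 0 + C (b i) * X 1)) :
    ∀ x y : ℝ, (x, y) ≠ (0, 0) → eval ![x, y] (Hess f) < 0 := by
  intro x y hxy0
  have hxy : ¬(x = 0 ∧ y = 0) := fun ⟨hx, hy⟩ => hxy0 (by rw [hx, hy])
  subst hf
  set L : Fin n → MvPolynomial (Fin 2) ℝ := fun i => C (a i) * X 0 + C (b i) * X 1 with hLdef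
  have hL0 : ∀ i, pderiv 0 (L i) = C (a i) := fun i => by
    simp [hLdef, pderiv_C_mul, pderiv_X_self, pderiv_X_of_ne]
  have hL1 : ∀ i, pderiv 1 (L i) = C (b i) := fun i => by
    simp [hLdef, pderiv_C_mul, pderiv_X_self, pderiv_X_of_ne]
  have hevL : ∀ k, eval ![x, y] (L k) = a k * x + b k * y := fun k => by
    simp [hLdef]
  have D : ∀ (m m' : Fin 2) (c c' : Fin n → ℝ), (∀ i, pderiv m (L i) = C (c i)) →
      (∀ i, pderiv m' (L i) = C (c' i)) →
      eval ![x, y] (pderiv m' (pderiv m (∏ i, L i)))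
        = ∑ i, ∑ j ∈ univ.erase i, c i * c' j *
            ∏ k ∈ (univ.erase i).erase j, (a k * x + b k * y) := by
    intro m m' c c' hc hc'
    rw [pderiv_prod m L c hc, map_sum, map_sum]
    refine Finset.sum_congr rfl fun i _ => ?_
    rw [pderiv_C_mul, pderiv_prod m' L c' hc', eval_mul, eval_C, map_sum, Finset.mul_sum]
    refine Finset.sum_congr rfl fun j _ => ?_
    rw [eval_mul, eval_C, map_prod]
    rw [Finset.prod_congr rfl fun k _ => hevL k]
    ring
  show eval ![x, y] (Hess (∏ i, L i)) < 0
  rw [Hess, map_sub, map_mul, map_pow,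
    D 0 0 a a hL0 hL0, D 1 1 b b hL1 hL1, D 1 0 b a hL1 hL0]
  exact real_main n hn a b hpair x y hxy (fun k => a k * x + b k * y) (fun k => rfl)
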